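/- arXiv:1605.09658 — 2 statements merged into one kernel-verified Lean document; each statement's English description precedes it below -/
import Mathlib

section
/- The gradient of s_μ(β) = max_{‖α‖₂ ≤ 1} (⟨α, Aβ⟩ − (μ/2)‖α‖₂²), namely ∇s_μ(β) = Aᵀ proj_K(Aβ/μ), is Lipschitz continuous with Lipschitz constant ‖A‖₂²/μ, where ‖A‖₂ is the spectral norm of A. -/
open scoped RealInnerProductSpace

noncomputable def projK {m : ℕ} (x : EuclideanSpace ℝ (Fin m)) : EuclideanSpace ℝ (Fin m) :=
  if ‖x‖ ≤ 1 then x else ‖x‖⁻¹ • x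

/-- The spectral norm of a matrix: the operator norm of the associated
Euclidean linear map. -/
noncomputable def matSpectralNorm {m p : ℕ} (A : Matrix (Fin m) (Fin p) ℝ) : ℝ :=
  ‖LinearMap.toContinuousLinearMap (Matrix.toEuclideanLin A)‖

lemma projK_lipschitz {m : ℕ} (x y : EuclideanSpace ℝ (Fin m)) :
    ‖projK x - projK y‖ ≤ ‖x - y‖ := by
  have sq_le : ‖projK x - projK y‖ ^ 2 ≤ ‖x - y‖ ^ 2 := by
    have hxy := real_inner_le_norm x y
    have hxy' : -(‖x‖ * ‖y‖) ≤ ⟪x, y⟫ := by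
      have := real_inner_le_norm x (-y)
      simp only [inner_neg_right, norm_neg] at this
      linarith
    have expand : ∀ u v : EuclideanSpace ℝ (Fin m),
        ‖u - v‖ ^ 2 = ‖u‖ ^ 2 - 2 * ⟪u, v⟫ + ‖v‖ ^ 2 := by
      intro u v
      rw [@norm_sub_sq_real]
      try ring
    unfold projK
    by_cases hx : ‖x‖ ≤ 1 <;> by_cases hy : ‖y‖ ≤ 1
    · simp [hx, hy]
    · -- ‖x‖ ≤ 1 < ‖y‖
      simp only [hx, hy, if_true, if_false]
      rw [expand, expand, real_inner_smul_right, norm_smul, norm_inv, norm_norm, mul_pow]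
      have hy1 : 1 < ‖y‖ := lt_of_not_ge hy
      have hy0 : 0 < ‖y‖ := lt_trans one_pos hy1
      have hsq1 : ‖y‖⁻¹ ^ 2 * ‖y‖ ^ 2 = 1 := by
        rw [← mul_pow, inv_mul_cancel₀ hy0.ne', one_pow]
      set s := ‖y‖⁻¹ * ⟪x, y⟫ with hs
      have hbs : ‖y‖ * s = ⟪x, y⟫ := by
        rw [hs]; field_simp
      have hs1 : s ≤ 1 := by
        rw [hs]
        have h := mul_le_mul_of_nonneg_left hxy (inv_nonneg.2 hy0.le)
        have e : ‖y‖⁻¹ * (‖x‖ * ‖y‖) = ‖x‖ := by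
          field_simp
          try ring
        rw [e] at h
        linarith
      have hx0 : 0 ≤ ‖x‖ := norm_nonneg x
      nlinarith [mul_nonneg (by linarith : (0:ℝ) ≤ ‖y‖ - 1)
        (by linarith : (0:ℝ) ≤ ‖y‖ + 1 - 2 * s)]
    · -- ‖y‖ ≤ 1 < ‖x‖
      simp only [hx, hy, if_true, if_false]
      rw [expand, expand, real_inner_smul_left, norm_smul, norm_inv, norm_norm, mul_pow]
      have hx1 : 1 < ‖x‖ := lt_of_not_ge hx
      have hx0 : 0 < ‖x‖ := lt_trans one_pos hx1
      have hsq1 : ‖x‖⁻¹ ^ 2 * ‖x‖ ^ 2 = 1 := by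
        rw [← mul_pow, inv_mul_cancel₀ hx0.ne', one_pow]
      set s := ‖x‖⁻¹ * ⟪x, y⟫ with hs
      have hbs : ‖x‖ * s = ⟪x, y⟫ := by
        rw [hs]; field_simp
      have hs1 : s ≤ 1 := by
        rw [hs]
        have h := mul_le_mul_of_nonneg_left hxy (inv_nonneg.2 hx0.le)
        have e : ‖x‖⁻¹ * (‖x‖ * ‖y‖) = ‖y‖ := by
          field_simp
          try ring
        rw [e] at h
        linarith
      have hy0 : 0 ≤ ‖y‖ := norm_nonneg y
      nlinarith [mul_nonneg (by linarith : (0:ℝ) ≤ ‖x‖ - 1)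
        (by linarith : (0:ℝ) ≤ ‖x‖ + 1 - 2 * s)]
    · -- 1 < ‖x‖, 1 < ‖y‖
      simp only [hx, hy, if_false]
      rw [expand, expand, real_inner_smul_left, real_inner_smul_right,
        norm_smul, norm_smul, norm_inv, norm_norm, norm_inv, norm_norm, mul_pow, mul_pow]
      have hx1 : 1 < ‖x‖ := lt_of_not_ge hx
      have hy1 : 1 < ‖y‖ := lt_of_not_ge hy
      have hx0 : 0 < ‖x‖ := lt_trans one_pos hx1
      have hy0 : 0 < ‖y‖ := lt_trans one_pos hy1
      have hsq1 : ‖x‖⁻¹ ^ 2 * ‖x‖ ^ 2 = 1 := by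
        rw [← mul_pow, inv_mul_cancel₀ hx0.ne', one_pow]
      have hsq1' : ‖y‖⁻¹ ^ 2 * ‖y‖ ^ 2 = 1 := by
        rw [← mul_pow, inv_mul_cancel₀ hy0.ne', one_pow]
      set s := ‖x‖⁻¹ * (‖y‖⁻¹ * ⟪x, y⟫) with hs
      have hbs : ‖x‖ * (‖y‖ * s) = ⟪x, y⟫ := by
        rw [hs]
        field_simp
      have hcc : (0:ℝ) ≤ ‖x‖⁻¹ * ‖y‖⁻¹ := by positivity
      have e : ‖x‖⁻¹ * ‖y‖⁻¹ * (‖x‖ * ‖y‖) = 1 := by field_simp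
      have hs1 : s ≤ 1 := by
        have h := mul_le_mul_of_nonneg_left hxy hcc
        rw [e] at h
        rw [hs]; linarith [h]
      have hs2 : -1 ≤ s := by
        have h := mul_le_mul_of_nonneg_left hxy' hcc
        have e2 : ‖x‖⁻¹ * ‖y‖⁻¹ * -(‖x‖ * ‖y‖) = -1 := by
          rw [mul_neg, e]
        rw [e2] at h
        rw [hs]; linarith [h]
      rw [hsq1, hsq1']
      nlinarith [sq_nonneg (‖x‖ - ‖y‖),
        mul_nonneg (by nlinarith : (0:ℝ) ≤ ‖x‖ * ‖y‖ - 1)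
          (by linarith : (0:ℝ) ≤ 2 - 2 * s)]
  exact (pow_le_pow_iff_left₀ (norm_nonneg _) (norm_nonneg _) two_ne_zero).1 sq_le

theorem smoothedTV_gradient_lipschitz {m p : ℕ} (A : Matrix (Fin m) (Fin p) ℝ)
    (μ : ℝ) (hμ : 0 < μ) (β₁ β₂ : EuclideanSpace ℝ (Fin p)) :
    ‖Matrix.toEuclideanLin A.transpose (projK (μ⁻¹ • Matrix.toEuclideanLin A β₁)) -
        Matrix.toEuclideanLin A.transpose (projK (μ⁻¹ • Matrix.toEuclideanLin A β₂))‖ ≤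
      matSpectralNorm A ^ 2 / μ * ‖β₁ - β₂‖ := by
  set T := LinearMap.toContinuousLinearMap (Matrix.toEuclideanLin A) with hT
  have hTapp : ∀ v, Matrix.toEuclideanLin A v = T v := fun v => rfl
  have hAT : A.transpose = A.conjTranspose := by
    ext i j; simp [Matrix.conjTranspose]
  have hadj : ∀ v, Matrix.toEuclideanLin A.transpose v
      = LinearMap.adjoint (Matrix.toEuclideanLin A) v := by
    intro v
    rw [hAT, Matrix.toEuclideanLin_conjTranspose_eq_adjoint]
  have hAtnorm : ∀ v : EuclideanSpace ℝ (Fin m),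
      ‖Matrix.toEuclideanLin A.transpose v‖ ≤ matSpectralNorm A * ‖v‖ := by
    intro v
    set w := Matrix.toEuclideanLin A.transpose v with hw
    have hsq : ‖w‖ ^ 2 = ⟪v, Matrix.toEuclideanLin A w⟫ := by
      rw [hw, ← real_inner_self_eq_norm_sq]
      rw [hadj v, LinearMap.adjoint_inner_left]
    have h1 : ⟪v, Matrix.toEuclideanLin A w⟫ ≤ ‖v‖ * (matSpectralNorm A * ‖w‖) := by
      calc ⟪v, Matrix.toEuclideanLin A w⟫ ≤ ‖v‖ * ‖Matrix.toEuclideanLin A w‖ :=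
            real_inner_le_norm _ _
        _ ≤ ‖v‖ * (matSpectralNorm A * ‖w‖) := by
            apply mul_le_mul_of_nonneg_left _ (norm_nonneg v)
            exact T.le_opNorm w
    have hwsq : ‖w‖ ^ 2 ≤ ‖v‖ * (matSpectralNorm A * ‖w‖) := hsq ▸ h1
    have hn0 : 0 ≤ matSpectralNorm A := norm_nonneg T
    rcases eq_or_lt_of_le (norm_nonneg w) with h0 | h0
    · rw [← h0]; exact mul_nonneg hn0 (norm_nonneg v)
    · have := le_of_mul_le_mul_right (by nlinarith : ‖w‖ * ‖w‖ ≤ (matSpectralNorm A * ‖v‖) * ‖w‖) h0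
      linarith [this]
  have hlin : Matrix.toEuclideanLin A.transpose (projK (μ⁻¹ • Matrix.toEuclideanLin A β₁)) -
      Matrix.toEuclideanLin A.transpose (projK (μ⁻¹ • Matrix.toEuclideanLin A β₂))
      = Matrix.toEuclideanLin A.transpose
        (projK (μ⁻¹ • Matrix.toEuclideanLin A β₁) - projK (μ⁻¹ • Matrix.toEuclideanLin A β₂)) := by
    rw [map_sub]
  rw [hlin]
  calc ‖Matrix.toEuclideanLin A.transpose _‖
      ≤ matSpectralNorm A * ‖projK (μ⁻¹ • Matrix.toEuclideanLin A β₁) -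
          projK (μ⁻¹ • Matrix.toEuclideanLin A β₂)‖ := hAtnorm _
    _ ≤ matSpectralNorm A * ‖μ⁻¹ • Matrix.toEuclideanLin A β₁ - μ⁻¹ • Matrix.toEuclideanLin A β₂‖ := by
        apply mul_le_mul_of_nonneg_left (projK_lipschitz _ _)
        exact norm_nonneg T
    _ ≤ matSpectralNorm A ^ 2 / μ * ‖β₁ - β₂‖ := by
        rw [← smul_sub, norm_smul, norm_inv, Real.norm_eq_abs, abs_of_pos hμ,
          ← map_sub]
        have hle : ‖Matrix.toEuclideanLin A (β₁ - β₂)‖ ≤ matSpectralNorm A * ‖β₁ - β₂‖ :=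
          T.le_opNorm _
        have hn : 0 ≤ matSpectralNorm A := norm_nonneg T
        rw [div_mul_eq_mul_div, ← sub_nonneg]
        have : matSpectralNorm A ^ 2 * ‖β₁ - β₂‖ / μ
            - matSpectralNorm A * (μ⁻¹ * ‖Matrix.toEuclideanLin A (β₁ - β₂)‖)
            = (matSpectralNorm A * (matSpectralNorm A * ‖β₁ - β₂‖
                - ‖Matrix.toEuclideanLin A (β₁ - β₂)‖)) / μ := by
          field_simp
          try ring
        rw [this]
        apply div_nonneg _ hμ.le
        exact mul_nonneg hn (by linarith)
end

section
/- Let g be convex differentiable with L(∇g)-Lipschitz gradient, s convex positively homogeneous of degree 1 with smoothing s_μ satisfying s_μ ≤ s ≤ s_μ + μM and L(∇s_μ) = ‖A‖₂²/μ, and γ > 0. For fixed ε > 0, the choice μ_opt(ε) = (−γM‖A‖₂² + sqrt((γM‖A‖₂²)² + M L(∇g) ‖A‖₂² ε)) / (M L(∇g)) is the unique positive minimizer over μ > 0 of the function μ ↦ (L(∇g) + γ‖A‖₂²/μ) / (ε − μγM), defined on the interval 0 < μ < ε/(γM). -/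
theorem optimal_smoothing_parameter (Lg nA γ M ε : ℝ)
    (hLg : 0 < Lg) (hnA : 0 < nA) (hγ : 0 < γ) (hM : 0 < M) (hε : 0 < ε)
    (h : ℝ → ℝ) (hh : h = fun μ => (Lg + γ * nA ^ 2 / μ) / (ε - μ * γ * M))
    (μopt : ℝ)
    (hμopt : μopt = (-(γ * M * nA ^ 2) +
        Real.sqrt ((γ * M * nA ^ 2) ^ 2 + M * Lg * nA ^ 2 * ε)) / (M * Lg)) :
    0 < μopt ∧ μopt < ε / (γ * M) ∧
      (∀ μ, 0 < μ → μ < ε / (γ * M) → h μopt ≤ h μ) ∧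
      ∀ μ, 0 < μ → μ < ε / (γ * M) → h μ = h μopt → μ = μopt := by
  set t := Real.sqrt ((γ * M * nA ^ 2) ^ 2 + M * Lg * nA ^ 2 * ε) with htdef
  have ht0 : 0 ≤ t := Real.sqrt_nonneg _
  have ht2 : t ^ 2 = (γ * M * nA ^ 2) ^ 2 + M * Lg * nA ^ 2 * ε := by
    rw [htdef]; exact Real.sq_sqrt (by positivity)
  have ha : (0 : ℝ) < γ * M * nA ^ 2 := by positivity
  have htgt : γ * M * nA ^ 2 < t := by
    nlinarith [ht2, mul_pos (mul_pos hM hLg) (mul_pos (pow_pos hnA 2) hε)]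
  have hMLg : (0 : ℝ) < M * Lg := by positivity
  have hpos : 0 < μopt := by
    rw [hμopt]; apply div_pos _ hMLg; linarith
  have hE : Lg * γ * M * μopt ^ 2 + 2 * (γ * nA ^ 2) * γ * M * μopt - γ * nA ^ 2 * ε = 0 := by
    rw [hμopt]
    have hne : (M * Lg) ≠ 0 := ne_of_gt hMLg
    field_simp
    linear_combination γ * ht2
  have hc : (0 : ℝ) < γ * nA ^ 2 := by positivity
  have hlt : μopt * γ * M < ε := by
    nlinarith [hE, mul_pos (mul_pos (mul_pos hLg hγ) hM) (mul_pos hpos hpos),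
      mul_pos (mul_pos hc hc) (mul_pos hM hpos)]
  have hd1 : 0 < μopt * (ε - μopt * γ * M) := mul_pos hpos (by linarith)
  have hform : ∀ μ : ℝ, μ ≠ 0 → ε - μ * γ * M ≠ 0 →
      h μ = (Lg * μ + γ * nA ^ 2) / (μ * (ε - μ * γ * M)) := by
    intro μ hμ hμ2
    rw [hh]
    field_simp
  have key : ∀ μ : ℝ,
      (Lg * μ + γ * nA ^ 2) * (μopt * (ε - μopt * γ * M)) -
        (Lg * μopt + γ * nA ^ 2) * (μ * (ε - μ * γ * M)) =
      (Lg * μopt + γ * nA ^ 2) * (γ * M) * (μ - μopt) ^ 2 := by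
    intro μ
    linear_combination (μ - μopt) * hE
  refine ⟨hpos, (lt_div_iff₀ (by positivity)).2 (by linarith), ?_, ?_⟩
  · intro μ hμ hμlt
    have hμε : μ * γ * M < ε := by
      have := (lt_div_iff₀ (by positivity : (0:ℝ) < γ * M)).1 hμlt
      linarith
    have hd2 : 0 < μ * (ε - μ * γ * M) := mul_pos hμ (by linarith)
    rw [hform μopt (ne_of_gt hpos) (by linarith), hform μ (ne_of_gt hμ) (by linarith),
      div_le_div_iff₀ hd1 hd2]
    have hrhs : 0 ≤ (Lg * μopt + γ * nA ^ 2) * (γ * M) * (μ - μopt) ^ 2 := by positivity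
    linarith [key μ, hrhs]
  · intro μ hμ hμlt heq
    have hμε : μ * γ * M < ε := by
      have := (lt_div_iff₀ (by positivity : (0:ℝ) < γ * M)).1 hμlt
      linarith
    have hd2 : 0 < μ * (ε - μ * γ * M) := mul_pos hμ (by linarith)
    rw [hform μopt (ne_of_gt hpos) (by linarith), hform μ (ne_of_gt hμ) (by linarith)] at heq
    have hcross := (div_eq_div_iff (ne_of_gt hd2) (ne_of_gt hd1)).1 heq
    have hz : (Lg * μopt + γ * nA ^ 2) * (γ * M) * (μ - μopt) ^ 2 = 0 := by
      have := key μ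
      linarith
    have hpos' : 0 < (Lg * μopt + γ * nA ^ 2) * (γ * M) := by positivity
    have hsq : (μ - μopt) ^ 2 = 0 := by
      rcases mul_eq_zero.1 hz with h' | h'
      · exact absurd h' (ne_of_gt hpos')
      · exact h'
    have := pow_eq_zero_iff (n := 2) (by norm_num) |>.1 hsq
    linarith
end
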